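/- Every betweenness algebra is embeddable into the complex algebra of a 3-frame whose relation satisfies axiom (BT1): if (A,f,g) is a b-algebra, then there exist a set W, a ternary relation R on W satisfying R(x,y,z) → R(z,y,x) for all x,y,z ∈ W, and a map s : A → 𝒫(W) such that s is injective, s(⊥) = ∅, s(⊤) = W, s(a ⊓ b) = s(a) ∩ s(b), s(a ⊔ b) = s(a) ∪ s(b), s(-a) = W ∖ s(a), and for all a,b: s(f(a,b)) = {z ∈ W : ∃ x ∈ s(a), y ∈ s(b), R(x,z,y)} and s(g(a,b)) = {z ∈ W : ∀ x ∈ s(a), y ∈ s(b), R(x,z,y)}. -/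

import Mathlib

/-- A binary possibility operator on a Boolean algebra. -/
def IsPossibilityOp {A : Type*} [BooleanAlgebra A] (f : A → A → A) : Prop :=
  (∀ a, f a ⊥ = ⊥) ∧ (∀ a, f ⊥ a = ⊥) ∧
  (∀ a b b', f a b ⊔ f a b' = f a (b ⊔ b')) ∧
  (∀ a a' b, f a b ⊔ f a' b = f (a ⊔ a') b)

/-- A binary sufficiency operator on a Boolean algebra. -/
def IsSufficiencyOp {A : Type*} [BooleanAlgebra A] (g : A → A → A) : Prop :=
  (∀ a, g a ⊥ = ⊤) ∧ (∀ a, g ⊥ a = ⊤) ∧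
  (∀ a b b', g a b ⊓ g a b' = g a (b ⊔ b')) ∧
  (∀ a a' b, g a b ⊓ g a' b = g (a ⊔ a') b)

/-- The dual `f^∂(a,b) = -f(-a,-b)` of a possibility operator. -/
def fdual {A : Type*} [BooleanAlgebra A] (f : A → A → A) (a b : A) : A := (f aᶜ bᶜ)ᶜ

/-- The operator `g*(a,b) = g(-a,-b)`. -/
def gstar {A : Type*} [BooleanAlgebra A] (g : A → A → A) (a b : A) : A := g aᶜ bᶜ

/-- The auxiliary operator `u(a,b) = f^∂(a,b) ⊓ g*(a,b)`. -/
def uop {A : Type*} [BooleanAlgebra A] (f g : A → A → A) (a b : A) : A :=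
  fdual f a b ⊓ gstar g a b

universe u

section BAlgRep

variable {A : Type u} [BooleanAlgebra A]

/-- Ultrafilters of a Boolean algebra, as sets. -/
def BAUF (F : Set A) : Prop :=
  ⊤ ∈ F ∧ ⊥ ∉ F ∧ (∀ a b : A, a ∈ F → a ≤ b → b ∈ F) ∧
    (∀ a b : A, a ∈ F → b ∈ F → a ⊓ b ∈ F) ∧ (∀ a : A, a ∈ F ∨ aᶜ ∈ F)

namespace BAUF

lemma top_mem {F : Set A} (h : BAUF F) : ⊤ ∈ F := h.1

lemma bot_not_mem {F : Set A} (h : BAUF F) : ⊥ ∉ F := h.2.1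

lemma up {F : Set A} (h : BAUF F) {a b : A} (ha : a ∈ F) (hab : a ≤ b) : b ∈ F :=
  h.2.2.1 a b ha hab

lemma inf_mem {F : Set A} (h : BAUF F) {a b : A} (ha : a ∈ F) (hb : b ∈ F) : a ⊓ b ∈ F :=
  h.2.2.2.1 a b ha hb

lemma compl_mem {F : Set A} (h : BAUF F) {a : A} (ha : a ∉ F) : aᶜ ∈ F :=
  (h.2.2.2.2 a).resolve_left ha

lemma not_mem_of_compl {F : Set A} (h : BAUF F) {a : A} (ha : aᶜ ∈ F) : a ∉ F := fun h' =>
  h.bot_not_mem (by simpa using h.inf_mem h' ha)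

lemma ne_bot {F : Set A} (h : BAUF F) {a : A} (ha : a ∈ F) : a ≠ ⊥ := fun e =>
  h.bot_not_mem (e ▸ ha)

lemma prime {F : Set A} (h : BAUF F) {a b : A} (hab : a ⊔ b ∈ F) : a ∈ F ∨ b ∈ F := by
  by_contra hc
  push_neg at hc
  have h3 := h.inf_mem hab (h.inf_mem (h.compl_mem hc.1) (h.compl_mem hc.2))
  rw [← compl_sup, inf_compl_eq_bot] at h3
  exact h.bot_not_mem h3

end BAUF

/-- Decomposition `x = (x ⊓ c) ⊔ (x ⊓ cᶜ)`. -/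
lemma inf_compl_decomp (x c : A) : x ⊓ c ⊔ x ⊓ cᶜ = x := by
  rw [← inf_sup_left, sup_compl_eq_top, inf_top_eq]

/-- Key Zorn-style extension lemma: any "good" seed extends to an ultrafilter all of whose
elements are good. -/
lemma uf_extend (D : A → Prop)
    (mono : ∀ a b : A, a ≤ b → D a → D b)
    (split : ∀ b1 b2 c : A, D (b1 ⊓ b2) → D (b1 ⊓ c) ∨ D (b2 ⊓ cᶜ))
    (hbot : ¬ D ⊥) (a0 : A) (seed : D a0) :
    ∃ F : Set A, BAUF F ∧ a0 ∈ F ∧ ∀ c ∈ F, D c := by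
  set S : Set (Set A) := {F | ⊤ ∈ F ∧ (∀ a b : A, a ∈ F → a ≤ b → b ∈ F) ∧
    (∀ a b : A, a ∈ F → b ∈ F → a ⊓ b ∈ F) ∧ a0 ∈ F ∧ ∀ c ∈ F, D c} with hSdef
  have hzorn : ∀ C ⊆ S, IsChain (· ⊆ ·) C → C.Nonempty →
      ∃ ub ∈ S, ∀ s ∈ C, s ⊆ ub := by
    rintro C hC hchain ⟨F0, hF0⟩
    refine ⟨⋃₀ C, ⟨?_, ?_, ?_, ?_, ?_⟩, fun s hs => Set.subset_sUnion_of_mem hs⟩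
    · exact ⟨F0, hF0, (hC hF0).1⟩
    · rintro a b ⟨G, hG, haG⟩ hab
      exact ⟨G, hG, (hC hG).2.1 a b haG hab⟩
    · rintro a b ⟨G1, hG1, ha⟩ ⟨G2, hG2, hb⟩
      rcases hchain.total hG1 hG2 with hsub | hsub
      · exact ⟨G2, hG2, (hC hG2).2.2.1 a b (hsub ha) hb⟩
      · exact ⟨G1, hG1, (hC hG1).2.2.1 a b ha (hsub hb)⟩
    · exact ⟨F0, hF0, (hC hF0).2.2.2.1⟩
    · rintro c ⟨G, hG, hc⟩
      exact (hC hG).2.2.2.2 c hc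
  have hmem : {c : A | a0 ≤ c} ∈ S := by
    refine ⟨le_top, ?_, ?_, le_refl a0, ?_⟩
    · exact fun a b ha hab => ha.trans hab
    · exact fun a b ha hb => le_inf ha hb
    · exact fun c hc => mono a0 c hc seed
  obtain ⟨M, -, hMS, hMmax⟩ := zorn_subset_nonempty S hzorn _ hmem
  -- extension step: if `e ∉ M` but all `b ⊓ e` are good, contradiction with maximality
  have hext : ∀ e : A, e ∉ M → (∀ b ∈ M, D (b ⊓ e)) → False := by
    intro e he hgood
    set M' : Set A := {x | ∃ b ∈ M, b ⊓ e ≤ x} with hM'def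
    have hM'S : M' ∈ S := by
      refine ⟨⟨⊤, hMS.1, le_top⟩, ?_, ?_, ⟨a0, hMS.2.2.2.1, inf_le_left⟩, ?_⟩
      · rintro a b ⟨b0, hb0, hle⟩ hab
        exact ⟨b0, hb0, hle.trans hab⟩
      · rintro a b ⟨b1, hb1, h1⟩ ⟨b2, hb2, h2⟩
        refine ⟨b1 ⊓ b2, hMS.2.2.1 b1 b2 hb1 hb2, le_inf ?_ ?_⟩
        · exact le_trans (inf_le_inf_right e inf_le_left) h1
        · exact le_trans (inf_le_inf_right e inf_le_right) h2
      · rintro c ⟨b0, hb0, hle⟩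
        exact mono _ _ hle (hgood b0 hb0)
    have hsub : M ⊆ M' := fun b hb => ⟨b, hb, inf_le_left⟩
    have hsub' : M' ⊆ M := hMmax hM'S hsub
    exact he (hsub' ⟨⊤, hMS.1, inf_le_right⟩)
  have hultra : ∀ c : A, c ∈ M ∨ cᶜ ∈ M := by
    intro c
    by_contra hc
    push_neg at hc
    have hsplit2 : (∀ b ∈ M, D (b ⊓ c)) ∨ (∀ b ∈ M, D (b ⊓ cᶜ)) := by
      by_contra h2
      push_neg at h2
      obtain ⟨⟨b1, hb1, hd1⟩, ⟨b2, hb2, hd2⟩⟩ := h2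
      rcases split b1 b2 c (hMS.2.2.2.2 _ (hMS.2.2.1 b1 b2 hb1 hb2)) with h | h
      · exact hd1 h
      · exact hd2 h
    rcases hsplit2 with hall | hall
    · exact hext c hc.1 hall
    · exact hext cᶜ hc.2 hall
  have hbotM : ⊥ ∉ M := fun hb => hbot (hMS.2.2.2.2 ⊥ hb)
  exact ⟨M, ⟨hMS.1, hbotM, hMS.2.1, hMS.2.2.1, hultra⟩, hMS.2.2.2.1, hMS.2.2.2.2⟩

/-- Every nonzero element lies in some ultrafilter. -/
lemma exists_uf_mem {a : A} (ha : a ≠ ⊥) : ∃ F : Set A, BAUF F ∧ a ∈ F := by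
  have mono : ∀ p q : A, p ≤ q → p ≠ ⊥ → q ≠ ⊥ := by
    rintro p q hpq hp rfl
    exact hp (le_bot_iff.1 hpq)
  have split : ∀ b1 b2 c : A, b1 ⊓ b2 ≠ ⊥ → b1 ⊓ c ≠ ⊥ ∨ b2 ⊓ cᶜ ≠ ⊥ := by
    intro b1 b2 c h
    by_contra h2
    push_neg at h2
    obtain ⟨e1, e2⟩ := h2
    apply h
    have h1 : b1 ⊓ b2 ⊓ c = ⊥ :=
      le_bot_iff.1 ((inf_le_inf_right c inf_le_left).trans (le_of_eq e1))
    have h2' : b1 ⊓ b2 ⊓ cᶜ = ⊥ :=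
      le_bot_iff.1 ((inf_le_inf_right cᶜ inf_le_right).trans (le_of_eq e2))
    calc b1 ⊓ b2 = b1 ⊓ b2 ⊓ c ⊔ b1 ⊓ b2 ⊓ cᶜ := (inf_compl_decomp _ c).symm
      _ = ⊥ := by rw [h1, h2', bot_sup_eq]
  obtain ⟨F, hF, haF, -⟩ := uf_extend (fun c => c ≠ ⊥) mono split (fun h => h rfl) a ha
  exact ⟨F, hF, haF⟩

section Ops

variable {f g : A → A → A}

lemma poss_mono_left (hf : IsPossibilityOp f) {a a' : A} (h : a ≤ a') (b : A) :
    f a b ≤ f a' b := by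
  have e := hf.2.2.2 a a' b
  rw [sup_eq_right.2 h] at e
  exact le_sup_left.trans (le_of_eq e)

lemma poss_mono_right (hf : IsPossibilityOp f) (a : A) {b b' : A} (h : b ≤ b') :
    f a b ≤ f a b' := by
  have e := hf.2.2.1 a b b'
  rw [sup_eq_right.2 h] at e
  exact le_sup_left.trans (le_of_eq e)

lemma suff_anti_left (hg : IsSufficiencyOp g) {a a' : A} (h : a ≤ a') (b : A) :
    g a' b ≤ g a b := by
  have e := hg.2.2.2 a a' b
  rw [sup_eq_right.2 h] at e
  exact (le_of_eq e.symm).trans inf_le_left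

lemma suff_anti_right (hg : IsSufficiencyOp g) (a : A) {b b' : A} (h : b ≤ b') :
    g a b' ≤ g a b := by
  have e := hg.2.2.1 a b b'
  rw [sup_eq_right.2 h] at e
  exact (le_of_eq e.symm).trans inf_le_left

/-- Existence lemma for the possibility operator. -/
lemma f_existence (hf : IsPossibilityOp f) {z : Set A} (hz : BAUF z)
    {a b : A} (hab : f a b ∈ z) :
    ∃ x y : Set A, BAUF x ∧ BAUF y ∧ a ∈ x ∧ b ∈ y ∧
      ∀ c ∈ x, ∀ d ∈ y, f c d ∈ z := by
  have mono1 : ∀ p q : A, p ≤ q → f p b ∈ z → f q b ∈ z :=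
    fun p q hpq hp => hz.up hp (poss_mono_left hf hpq b)
  have split1 : ∀ b1 b2 c : A, f (b1 ⊓ b2) b ∈ z → f (b1 ⊓ c) b ∈ z ∨ f (b2 ⊓ cᶜ) b ∈ z := by
    intro b1 b2 c hD
    have e : f (b1 ⊓ b2 ⊓ c) b ⊔ f (b1 ⊓ b2 ⊓ cᶜ) b = f (b1 ⊓ b2) b := by
      rw [hf.2.2.2, inf_compl_decomp]
    rcases hz.prime (by rw [e]; exact hD) with h | h
    · exact Or.inl (hz.up h (poss_mono_left hf (inf_le_inf_right c inf_le_left) b))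
    · exact Or.inr (hz.up h (poss_mono_left hf (inf_le_inf_right cᶜ inf_le_right) b))
  have hbot1 : ¬ f ⊥ b ∈ z := by rw [hf.2.1 b]; exact hz.bot_not_mem
  obtain ⟨x, hx, hax, hxD⟩ := uf_extend (fun a' => f a' b ∈ z) mono1 split1 hbot1 a hab
  have mono2 : ∀ p q : A, p ≤ q → (∀ c ∈ x, f c p ∈ z) → ∀ c ∈ x, f c q ∈ z :=
    fun p q hpq hp c hc => hz.up (hp c hc) (poss_mono_right hf c hpq)
  have split2 : ∀ b1 b2 c : A, (∀ c' ∈ x, f c' (b1 ⊓ b2) ∈ z) →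
      (∀ c' ∈ x, f c' (b1 ⊓ c) ∈ z) ∨ ∀ c' ∈ x, f c' (b2 ⊓ cᶜ) ∈ z := by
    intro b1 b2 c hD
    by_contra h2
    push_neg at h2
    obtain ⟨⟨c1, hc1, hd1⟩, ⟨c2, hc2, hd2⟩⟩ := h2
    have hc0 : c1 ⊓ c2 ∈ x := hx.inf_mem hc1 hc2
    have e : f (c1 ⊓ c2) (b1 ⊓ b2 ⊓ c) ⊔ f (c1 ⊓ c2) (b1 ⊓ b2 ⊓ cᶜ)
        = f (c1 ⊓ c2) (b1 ⊓ b2) := by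
      rw [hf.2.2.1, inf_compl_decomp]
    rcases hz.prime (by rw [e]; exact hD _ hc0) with h | h
    · exact hd1 (hz.up h ((poss_mono_left hf inf_le_left _).trans
        (poss_mono_right hf c1 (inf_le_inf_right c inf_le_left))))
    · exact hd2 (hz.up h ((poss_mono_left hf inf_le_right _).trans
        (poss_mono_right hf c2 (inf_le_inf_right cᶜ inf_le_right))))
  have hbot2 : ¬ ∀ c ∈ x, f c ⊥ ∈ z := by
    intro hD
    have := hD ⊤ hx.top_mem
    rw [hf.1 ⊤] at this
    exact hz.bot_not_mem this
  obtain ⟨y, hy, hby, hyD⟩ := uf_extend (fun b' => ∀ c ∈ x, f c b' ∈ z)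
    mono2 split2 hbot2 b hxD
  exact ⟨x, y, hx, hy, hax, hby, fun c hc d hd => hyD d hd c hc⟩

/-- Existence lemma for the sufficiency operator. -/
lemma g_existence (hg : IsSufficiencyOp g) {z : Set A} (hz : BAUF z)
    {a b : A} (hab : g a b ∉ z) :
    ∃ x y : Set A, BAUF x ∧ BAUF y ∧ a ∈ x ∧ b ∈ y ∧
      ∀ c ∈ x, ∀ d ∈ y, g c d ∉ z := by
  have mono1 : ∀ p q : A, p ≤ q → g p b ∉ z → g q b ∉ z :=
    fun p q hpq hp hq => hp (hz.up hq (suff_anti_left hg hpq b))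
  have split1 : ∀ b1 b2 c : A, g (b1 ⊓ b2) b ∉ z → g (b1 ⊓ c) b ∉ z ∨ g (b2 ⊓ cᶜ) b ∉ z := by
    intro b1 b2 c hD
    by_contra h2
    push_neg at h2
    obtain ⟨h21, h22⟩ := h2
    apply hD
    have e : g (b1 ⊓ b2 ⊓ c) b ⊓ g (b1 ⊓ b2 ⊓ cᶜ) b = g (b1 ⊓ b2) b := by
      rw [hg.2.2.2, inf_compl_decomp]
    rw [← e]
    exact hz.inf_mem
      (hz.up h21 (suff_anti_left hg (inf_le_inf_right c inf_le_left) b))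
      (hz.up h22 (suff_anti_left hg (inf_le_inf_right cᶜ inf_le_right) b))
  have hbot1 : ¬ g ⊥ b ∉ z := by
    rw [not_not, hg.2.1 b]; exact hz.top_mem
  obtain ⟨x, hx, hax, hxD⟩ := uf_extend (fun a' => g a' b ∉ z) mono1 split1 hbot1 a hab
  have mono2 : ∀ p q : A, p ≤ q → (∀ c ∈ x, g c p ∉ z) → ∀ c ∈ x, g c q ∉ z :=
    fun p q hpq hp c hc hq => hp c hc (hz.up hq (suff_anti_right hg c hpq))
  have split2 : ∀ b1 b2 c : A, (∀ c' ∈ x, g c' (b1 ⊓ b2) ∉ z) →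
      (∀ c' ∈ x, g c' (b1 ⊓ c) ∉ z) ∨ ∀ c' ∈ x, g c' (b2 ⊓ cᶜ) ∉ z := by
    intro b1 b2 c hD
    by_contra h2
    push_neg at h2
    obtain ⟨⟨c1, hc1, hd1⟩, ⟨c2, hc2, hd2⟩⟩ := h2
    have hc0 : c1 ⊓ c2 ∈ x := hx.inf_mem hc1 hc2
    apply hD (c1 ⊓ c2) hc0
    have e : g (c1 ⊓ c2) (b1 ⊓ b2 ⊓ c) ⊓ g (c1 ⊓ c2) (b1 ⊓ b2 ⊓ cᶜ)
        = g (c1 ⊓ c2) (b1 ⊓ b2) := by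
      rw [hg.2.2.1, inf_compl_decomp]
    rw [← e]
    refine hz.inf_mem (hz.up hd1 ?_) (hz.up hd2 ?_)
    · exact (suff_anti_left hg inf_le_left _).trans
        (suff_anti_right hg _ (inf_le_inf_right c inf_le_left))
    · exact (suff_anti_left hg inf_le_right _).trans
        (suff_anti_right hg _ (inf_le_inf_right cᶜ inf_le_right))
  have hbot2 : ¬ ∀ c ∈ x, g c ⊥ ∉ z := by
    intro hD
    apply hD ⊤ hx.top_mem
    rw [hg.1 ⊤]
    exact hz.top_mem
  obtain ⟨y, hy, hby, hyD⟩ := uf_extend (fun b' => ∀ c ∈ x, g c b' ∉ z)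
    mono2 split2 hbot2 b hxD
  exact ⟨x, y, hx, hy, hax, hby, fun c hc d hd => hyD d hd c hc⟩

end Ops

end BAlgRep

/-- Theorem: every betweenness algebra embeds into the complex algebra of a 3-frame whose
relation satisfies the symmetry axiom (BT1). -/
theorem b_algebra_embeds_into_3frame {A : Type u} [BooleanAlgebra A] [Nontrivial A]
    (f g : A → A → A) (hf : IsPossibilityOp f) (hg : IsSufficiencyOp g)
    (hw : ∀ a b : A, a ≠ ⊥ → b ≠ ⊥ → g a b ≤ f a b)
    (habt0 : ∀ x : A, x ≤ f x x)
    (habt1f : ∀ x y : A, f x y ≤ f y x)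
    (habt1g : ∀ x y : A, g x y ≤ g y x)
    (habt2 : ∀ x y z : A, y ⊓ f x z ≤ f (x ⊓ f x y) z)
    (habt3 : ∀ x y : A, f x (g x yᶜ ⊓ y) ≤ y) :
    ∃ (W : Type u) (R : W → W → W → Prop) (s : A → Set W),
      (∀ x y z : W, R x y z → R z y x) ∧
      Function.Injective s ∧ s ⊥ = ∅ ∧ s ⊤ = Set.univ ∧
      (∀ a b : A, s (a ⊓ b) = s a ∩ s b) ∧
      (∀ a b : A, s (a ⊔ b) = s a ∪ s b) ∧
      (∀ a : A, s aᶜ = Set.univ \ s a) ∧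
      (∀ a b : A, s (f a b) = {z | ∃ x ∈ s a, ∃ y ∈ s b, R x z y}) ∧
      (∀ a b : A, s (g a b) = {z | ∀ x ∈ s a, ∀ y ∈ s b, R x z y}) := by
  classical
  refine ⟨{F : Set A // BAUF F} × Bool,
      fun ξ ζ η => (∃ c ∈ ξ.1.1, ∃ d ∈ η.1.1, g c d ∈ ζ.1.1) ∨
        ((∀ c ∈ ξ.1.1, ∀ d ∈ η.1.1, f c d ∈ ζ.1.1) ∧ ξ.2 = ζ.2 ∧ η.2 = ζ.2),
      fun a => {w | a ∈ w.1.1}, ?_, ?_, ?_, ?_, ?_, ?_, ?_, ?_, ?_⟩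
  · -- BT1 symmetry
    rintro ξ ζ η (⟨c, hc, d, hd, hgz⟩ | ⟨hall, h1, h2⟩)
    · exact Or.inl ⟨d, hd, c, hc, ζ.1.2.up hgz (habt1g c d)⟩
    · exact Or.inr ⟨fun d hd c hc => ζ.1.2.up (hall c hc d hd) (habt1f c d), h2, h1⟩
  · -- injectivity
    intro p q hpq
    have key : ∀ p q : A,
        ({w : {F : Set A // BAUF F} × Bool | p ∈ w.1.1} =
          {w : {F : Set A // BAUF F} × Bool | q ∈ w.1.1}) → p ≤ q := by
      intro p q hpq
      by_contra hle
      have hne' : p ⊓ qᶜ ≠ ⊥ := by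
        intro e
        exact hle (by rwa [← sdiff_eq_bot_iff, sdiff_eq])
      obtain ⟨F, hF, hmem⟩ := exists_uf_mem hne'
      have hp : p ∈ F := hF.up hmem inf_le_left
      have hq : q ∉ F := hF.not_mem_of_compl (hF.up hmem inf_le_right)
      have hmem2 : (⟨⟨F, hF⟩, false⟩ : {F : Set A // BAUF F} × Bool) ∈
          {w : {F : Set A // BAUF F} × Bool | p ∈ w.1.1} := hp
      rw [hpq] at hmem2
      exact hq hmem2
    exact le_antisymm (key p q hpq) (key q p hpq.symm)
  · -- bottom
    exact Set.eq_empty_iff_forall_notMem.2 fun w hw' => w.1.2.bot_not_mem hw'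
  · -- top
    exact Set.eq_univ_iff_forall.2 fun w => w.1.2.top_mem
  · -- meets
    intro a b
    exact Set.ext fun w => ⟨fun h => ⟨w.1.2.up h inf_le_left, w.1.2.up h inf_le_right⟩,
      fun h => w.1.2.inf_mem h.1 h.2⟩
  · -- joins
    intro a b
    exact Set.ext fun w => ⟨fun h => w.1.2.prime h,
      fun h => h.elim (fun h1 => w.1.2.up h1 le_sup_left) fun h2 => w.1.2.up h2 le_sup_right⟩
  · -- complement
    intro a
    exact Set.ext fun w => ⟨fun h => ⟨trivial, w.1.2.not_mem_of_compl h⟩,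
      fun h => w.1.2.compl_mem h.2⟩
  · -- possibility operator
    intro a b
    ext ζ
    simp only [Set.mem_setOf_eq]
    constructor
    · intro hmem
      obtain ⟨x, y, hx, hy, hax, hby, hall⟩ := f_existence hf ζ.1.2 hmem
      exact ⟨⟨⟨x, hx⟩, ζ.2⟩, hax, ⟨⟨y, hy⟩, ζ.2⟩, hby, Or.inr ⟨hall, rfl, rfl⟩⟩
    · rintro ⟨ξ, hξ, η, hη, ⟨c, hc, d, hd, hgz⟩ | hR⟩
      · have h1 : a ⊓ c ∈ ξ.1.1 := ξ.1.2.inf_mem hξ hc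
        have h2 : b ⊓ d ∈ η.1.1 := η.1.2.inf_mem hη hd
        have key : g c d ≤ f a b :=
          calc g c d ≤ g (a ⊓ c) (b ⊓ d) :=
                (suff_anti_left hg inf_le_right _).trans (suff_anti_right hg _ inf_le_right)
            _ ≤ f (a ⊓ c) (b ⊓ d) := hw _ _ (ξ.1.2.ne_bot h1) (η.1.2.ne_bot h2)
            _ ≤ f a b :=
                (poss_mono_left hf inf_le_left _).trans (poss_mono_right hf _ inf_le_left)
        exact ζ.1.2.up hgz key
      · exact hR.1 a hξ b hη
  · -- sufficiency operator
    intro a b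
    ext ζ
    simp only [Set.mem_setOf_eq]
    constructor
    · intro h ξ hξ η hη
      exact Or.inl ⟨a, hξ, b, hη, h⟩
    · intro hall
      by_contra hng
      obtain ⟨x, y, hx, hy, hax, hby, hnot⟩ := g_existence hg ζ.1.2 hng
      rcases hall ⟨⟨x, hx⟩, !ζ.2⟩ hax ⟨⟨y, hy⟩, !ζ.2⟩ hby with
        ⟨c, hc, d, hd, hgz⟩ | ⟨-, htag, -⟩
      · exact hnot c hc d hd hgz
      · simp at htag
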